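/- Let k be a field of characteristic different from 2 and let D be a commutative k-algebra with dim_k D = 4 admitting a linear functional λ : D → k for which the bilinear form (x,y) ↦ λ(xy) is nondegenerate (a 4-dimensional commutative Frobenius k-algebra). Let (e_1,…,e_4), (f_1,…,f_4) be k-bases of D with λ(e_i f_j) = δ_{ij}, let F := D/k·1 (a 3-dimensional vector space) with quotient map π : D → F, and define ρ : D → F ⊗_k F by ρ(d) = Σ_{i=1}^4 π(d e_i) ⊗ π(f_i). Then the image of ρ is contained in the 6-dimensional space Sym_2(F) of symmetric tensors, ρ is injective, and consequently dim_k (Sym_2(F)/im(ρ)) = 2. -/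

import Mathlib

open TensorProduct

noncomputable section

variable (k D : Type*) [Field k] [CommRing D] [Algebra k D]

/-- `F := D / k·1`. -/
abbrev FrobQuotF : Type _ := D ⧸ Submodule.span k {(1 : D)}

/-- The quotient map `π : D → F = D/k·1`. -/
def frobPi : D →ₗ[k] FrobQuotF k D := (Submodule.span k {(1 : D)}).mkQ

/-- The map `ρ : D → F ⊗ F`, `d ↦ ∑ i, π (d * e i) ⊗ π (f i)`. -/
def frobRho (e f : Fin 4 → D) : D →ₗ[k] FrobQuotF k D ⊗[k] FrobQuotF k D :=
  ∑ i : Fin 4,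
    ((TensorProduct.mk k (FrobQuotF k D) (FrobQuotF k D)).flip (frobPi k D (f i))).comp
      ((frobPi k D).comp (LinearMap.mulRight k (e i)))

/-- The subspace of symmetric tensors of `F ⊗ F`, spanned by the `u ⊗ v + v ⊗ u`. -/
def symTensors (F : Type*) [AddCommGroup F] [Module k F] : Submodule k (F ⊗[k] F) :=
  Submodule.span k {z | ∃ u v : F, z = u ⊗ₜ[k] v + v ⊗ₜ[k] u}

variable {k D}

lemma frobRho_apply (e f : Fin 4 → D) (d : D) :
    frobRho k D e f d =
      ∑ i : Fin 4, frobPi k D (d * e i) ⊗ₜ[k] frobPi k D (f i) := by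
  simp [frobRho, LinearMap.sum_apply, LinearMap.mulRight_apply, TensorProduct.mk_apply]

/-- Dual-basis expansion: `x = ∑ j, Λ (x * b j) • a j`. -/
lemma dual_expand (Λ : D →ₗ[k] k) (a b : Module.Basis (Fin 4) k D)
    (h : ∀ i j, Λ (a i * b j) = if i = j then 1 else 0) (x : D) :
    ∑ j : Fin 4, Λ (x * b j) • a j = x := by
  have hx : ∀ j, Λ (x * b j) = a.repr x j := by
    intro j
    conv_lhs => rw [← a.sum_repr x]
    rw [Finset.sum_mul, map_sum]
    simp only [smul_mul_assoc, map_smul, h, smul_eq_mul, mul_ite, mul_one, mul_zero]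
    simp
  simp only [hx]
  exact a.sum_repr x

/-- The Casimir-type element `∑ π (x e i) ⊗ π (f i)` is symmetric. -/
lemma rho_symm (Λ : D →ₗ[k] k) (e f : Module.Basis (Fin 4) k D)
    (hdual : ∀ i j, Λ (e i * f j) = if i = j then 1 else 0) (x : D) :
    ∑ i : Fin 4, frobPi k D (f i) ⊗ₜ[k] frobPi k D (x * e i) =
    ∑ i : Fin 4, frobPi k D (x * e i) ⊗ₜ[k] frobPi k D (f i) := by
  have hdual' : ∀ i j, Λ (f i * e j) = if i = j then 1 else 0 := by
    intro i j
    rw [mul_comm, hdual]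
    simp [eq_comm]
  have hexp : ∀ y : D, frobPi k D y = ∑ j : Fin 4, Λ (y * e j) • frobPi k D (f j) := by
    intro y
    conv_lhs => rw [← dual_expand Λ f e hdual' y]
    rw [map_sum]
    simp only [map_smul]
  calc ∑ i : Fin 4, frobPi k D (f i) ⊗ₜ[k] frobPi k D (x * e i)
      = ∑ i : Fin 4, ∑ j : Fin 4,
          Λ (x * e i * e j) • (frobPi k D (f i) ⊗ₜ[k] frobPi k D (f j)) := by
        refine Finset.sum_congr rfl fun i _ => ?_
        rw [hexp (x * e i), tmul_sum]
        refine Finset.sum_congr rfl fun j _ => ?_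
        rw [tmul_smul]
    _ = ∑ i : Fin 4, ∑ j : Fin 4,
          Λ (x * e j * e i) • (frobPi k D (f j) ⊗ₜ[k] frobPi k D (f i)) := by
        rw [Finset.sum_comm]
    _ = ∑ i : Fin 4, frobPi k D (x * e i) ⊗ₜ[k] frobPi k D (f i) := by
        refine Finset.sum_congr rfl fun i _ => ?_
        rw [hexp (x * e i), sum_tmul]
        refine Finset.sum_congr rfl fun j _ => ?_
        rw [smul_tmul']
        congr 2
        ring

/-- Injectivity of `ρ`, reduced to a statement about `Λ`. -/
lemma rho_inj_aux (hdim : Module.finrank k D = 4) (Λ : D →ₗ[k] k)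
    (hnd : ∀ x : D, (∀ y : D, Λ (x * y) = 0) → x = 0) (d : D)
    (H : ∀ a b : D, Λ a = 0 → Λ b = 0 → Λ (b * (a * d)) = 0) : d = 0 := by
  have hD1 : (1 : D) ≠ 0 := by
    intro h
    have : Subsingleton D := subsingleton_of_zero_eq_one h.symm
    rw [Module.finrank_zero_of_subsingleton] at hdim
    exact absurd hdim (by omega)
  obtain ⟨u, hu⟩ : ∃ u : D, Λ u ≠ 0 := by
    by_contra h
    push_neg at h
    exact hD1 (hnd 1 fun y => by rw [one_mul]; exact h y)
  have hdec : ∀ y : D, Λ (y - (Λ y / Λ u) • u) = 0 := by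
    intro y
    rw [map_sub, map_smul, smul_eq_mul, div_mul_cancel₀ _ hu, sub_self]
  by_contra hd
  set c : D → k := fun a => Λ (u * (a * d)) / Λ u with hc
  have hmu : ∀ a : D, Λ a = 0 → ∀ y : D, Λ (y * (a * d)) = Λ y * c a := by
    intro a ha y
    have h0 := H a (y - (Λ y / Λ u) • u) ha (hdec y)
    rw [sub_mul, smul_mul_assoc, map_sub, map_smul, smul_eq_mul, sub_eq_zero] at h0
    rw [h0, hc]
    field_simp
  have hswap : ∀ a b : D, Λ a = 0 → Λ b = 0 → c a • b = c b • a := by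
    intro a b ha hb
    have key : ∀ z : D, Λ ((c a • b - c b • a) * z) = 0 := by
      intro z
      have h1 := hmu a ha (b * z)
      have h2 := hmu b hb (a * z)
      rw [show b * z * (a * d) = a * z * (b * d) by ring] at h1
      rw [sub_mul, smul_mul_assoc, smul_mul_assoc, map_sub, map_smul, map_smul,
        smul_eq_mul, smul_eq_mul]
      rw [h1] at h2
      rw [mul_comm (c a) (Λ (b * z)), mul_comm (c b) (Λ (a * z)), h2, sub_self]
    have := hnd _ key
    rwa [sub_eq_zero] at this
  have hc0 : ∀ a : D, Λ a = 0 → c a = 0 := by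
    intro a ha
    by_contra hca
    have hker : ∀ b : D, Λ b = 0 → b ∈ Submodule.span k ({u, a} : Set D) := by
      intro b hb
      have h1 := hswap a b ha hb
      have : b = (c b / c a) • a := by
        rw [div_eq_mul_inv, mul_comm, mul_smul, ← h1, smul_smul, inv_mul_cancel₀ hca, one_smul]
      rw [this]
      exact Submodule.smul_mem _ _ (Submodule.subset_span (by simp))
    have htop : (⊤ : Submodule k D) ≤ Submodule.span k ({u, a} : Set D) := by
      intro y _
      have hy : y = (Λ y / Λ u) • u + (y - (Λ y / Λ u) • u) := by abel
      rw [hy]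
      exact Submodule.add_mem _
        (Submodule.smul_mem _ _ (Submodule.subset_span (by simp)))
        (hker _ (hdec y))
    have hle : Module.finrank k D ≤ 2 := by
      have hr : Set.range ![u, a] = ({u, a} : Set D) := by
        ext x
        simp [Fin.exists_fin_two, or_comm]
      have h2 := finrank_le_of_span_eq_top (v := ![u, a])
        (by rw [hr]; exact top_le_iff.mp htop)
      simpa using h2
    omega
  have hann : ∀ a : D, Λ a = 0 → a * d = 0 := by
    intro a ha
    apply hnd
    intro y
    rw [show a * d * y = y * (a * d) by ring, hmu a ha y, hc0 a ha, mul_zero]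
  have hann' : ∀ x : D, x * d = 0 → Λ x = 0 := by
    intro x hx
    by_contra hΛx
    apply hd
    have h1 : (1 : D) = (Λ 1 / Λ x) • x + (1 - (Λ 1 / Λ x) • x) := by abel
    have h2 : Λ (1 - (Λ 1 / Λ x) • x) = 0 := by
      rw [map_sub, map_smul, smul_eq_mul, div_mul_cancel₀ _ hΛx, sub_self]
    calc d = 1 * d := (one_mul d).symm
      _ = ((Λ 1 / Λ x) • x + (1 - (Λ 1 / Λ x) • x)) * d := by rw [← h1]
      _ = (Λ 1 / Λ x) • (x * d) + (1 - (Λ 1 / Λ x) • x) * d := by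
          rw [add_mul, smul_mul_assoc]
      _ = 0 := by rw [hx, smul_zero, hann _ h2, add_zero]
  have hker0 : ∀ a : D, Λ a = 0 → a = 0 := by
    intro a ha
    apply hnd
    intro y
    exact hann' (a * y) (by rw [show a * y * d = y * (a * d) by ring, hann a ha, mul_zero])
  have hinj : Function.Injective Λ := by
    rw [← LinearMap.ker_eq_bot]
    exact LinearMap.ker_eq_bot'.mpr fun m hm => hker0 m hm
  have hle := LinearMap.finrank_le_finrank_of_injective hinj
  rw [hdim, Module.finrank_self] at hle
  omega

/-- The space of symmetric tensors on a 3-dimensional space is 6-dimensional. -/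
lemma finrank_symTensors (h2 : (2 : k) ≠ 0) (F : Type*) [AddCommGroup F] [Module k F]
    [Module.Finite k F] (hF : Module.finrank k F = 3) :
    Module.finrank k (symTensors k F) = 6 := by
  classical
  let b : Module.Basis (Fin 3) k F := Module.finBasisOfFinrankEq k F hF
  let B : Module.Basis (Fin 3 × Fin 3) k (F ⊗[k] F) := b.tensorProduct b
  let I := {p : Fin 3 × Fin 3 // p.1 ≤ p.2}
  let g : I → F ⊗[k] F := fun p => B (p.1.1, p.1.2) + B (p.1.2, p.1.1)
  have hcard : Fintype.card I = 6 := by decide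
  have hgB : ∀ p : I, g p = b p.1.1 ⊗ₜ[k] b p.1.2 + b p.1.2 ⊗ₜ[k] b p.1.1 := by
    intro p
    simp [g, B, Module.Basis.tensorProduct_apply']
  -- linear independence
  have hli : LinearIndependent k g := by
    rw [Fintype.linearIndependent_iff]
    intro cc hcc p
    have hrepr : ∀ q : I, B.repr (g q) =
        Finsupp.single ((q : Fin 3 × Fin 3).1, (q : Fin 3 × Fin 3).2) (1 : k)
        + Finsupp.single ((q : Fin 3 × Fin 3).2, (q : Fin 3 × Fin 3).1) 1 := by
      intro q
      simp [g, B.repr_self, map_add]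
    have h := DFunLike.congr_fun (congrArg B.repr hcc) ((p : Fin 3 × Fin 3).1, (p : Fin 3 × Fin 3).2)
    rw [map_sum] at h
    simp only [map_smul, hrepr, Finsupp.coe_smul, Finsupp.coe_add, Pi.smul_apply, Pi.add_apply,
      Finsupp.single_apply, Finsupp.coe_finset_sum, Finset.sum_apply, map_zero, Finsupp.coe_zero,
      Pi.zero_apply, smul_eq_mul] at h
    rw [Finset.sum_eq_single p] at h
    · by_cases hpp : (p : Fin 3 × Fin 3).1 = (p : Fin 3 × Fin 3).2
      · rw [if_pos rfl, if_pos (by rw [hpp]), one_add_one_eq_two] at h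
        exact (mul_eq_zero.mp h).resolve_right h2
      · rw [if_pos rfl,
          if_neg (by simp only [Prod.mk.injEq]; exact fun hh => hpp hh.2)] at h
        simpa using h
    · intro q _ hqp
      have hq := q.2
      have hp := p.2
      rw [if_neg (fun hh => hqp (Subtype.ext
            (Prod.ext (Prod.ext_iff.mp hh).1 (Prod.ext_iff.mp hh).2))),
        if_neg (fun hh => hqp (Subtype.ext (by
            have h1 : (q : Fin 3 × Fin 3).2 = (p : Fin 3 × Fin 3).1 := (Prod.ext_iff.mp hh).1
            have h2' : (q : Fin 3 × Fin 3).1 = (p : Fin 3 × Fin 3).2 := (Prod.ext_iff.mp hh).2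
            have h3 : (q : Fin 3 × Fin 3).2 ≤ (q : Fin 3 × Fin 3).1 := by
              rw [h1]; exact hp.trans_eq h2'.symm
            have hq12 : (q : Fin 3 × Fin 3).1 = (q : Fin 3 × Fin 3).2 := le_antisymm hq h3
            exact Prod.ext (hq12.trans h1) (hq12.symm.trans h2' ▸ rfl))))]
      simp
    · intro hp
      exact absurd (Finset.mem_univ p) hp
  -- span
  have hspan : Submodule.span k (Set.range g) = symTensors k F := by
    apply le_antisymm
    · rw [Submodule.span_le]
      rintro _ ⟨p, rfl⟩
      rw [hgB]
      exact Submodule.subset_span ⟨b p.1.1, b p.1.2, rfl⟩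
    · rw [symTensors, Submodule.span_le]
      rintro _ ⟨u, v, rfl⟩
      have base : ∀ i j : Fin 3, b i ⊗ₜ[k] b j + b j ⊗ₜ[k] b i ∈
          Submodule.span k (Set.range g) := by
        intro i j
        rcases le_total i j with hij | hij
        · refine Submodule.subset_span ⟨⟨(i, j), hij⟩, ?_⟩
          rw [hgB]
        · rw [add_comm]
          refine Submodule.subset_span ⟨⟨(j, i), hij⟩, ?_⟩
          rw [hgB]
      have hu : u ∈ Submodule.span k (Set.range b) := by rw [b.span_eq]; trivial
      induction hu using Submodule.span_induction with
      | mem x hx =>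
        obtain ⟨i, rfl⟩ := hx
        have hv : v ∈ Submodule.span k (Set.range b) := by rw [b.span_eq]; trivial
        induction hv using Submodule.span_induction with
        | mem y hy => obtain ⟨j, rfl⟩ := hy; exact base i j
        | zero => simp
        | add y z _ _ hy hz =>
          have : b i ⊗ₜ[k] (y + z) + (y + z) ⊗ₜ[k] b i =
              (b i ⊗ₜ[k] y + y ⊗ₜ[k] b i) + (b i ⊗ₜ[k] z + z ⊗ₜ[k] b i) := by
            rw [tmul_add, add_tmul]; abel
          rw [this]; exact Submodule.add_mem _ hy hz
        | smul a y _ hy =>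
          have : b i ⊗ₜ[k] (a • y) + (a • y) ⊗ₜ[k] b i =
              a • (b i ⊗ₜ[k] y + y ⊗ₜ[k] b i) := by
            simp [smul_add, smul_tmul', tmul_smul]
          rw [this]; exact Submodule.smul_mem _ _ hy
      | zero => simp
      | add x y _ _ hx hy =>
        have : (x + y) ⊗ₜ[k] v + v ⊗ₜ[k] (x + y) =
            (x ⊗ₜ[k] v + v ⊗ₜ[k] x) + (y ⊗ₜ[k] v + v ⊗ₜ[k] y) := by
          rw [tmul_add, add_tmul]; abel
        rw [this]; exact Submodule.add_mem _ hx hy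
      | smul a x _ hx =>
        have : (a • x) ⊗ₜ[k] v + v ⊗ₜ[k] (a • x) =
            a • (x ⊗ₜ[k] v + v ⊗ₜ[k] x) := by
          simp [smul_add, smul_tmul', tmul_smul]
        rw [this]; exact Submodule.smul_mem _ _ hx
  rw [← hspan, finrank_span_eq_card hli, hcard]

variable (k D)

set_option synthInstance.maxHeartbeats 1000000 in
set_option maxHeartbeats 1000000 in
/-- Let `D` be a `4`-dimensional commutative Frobenius algebra over a
field `k` of characteristic ≠ 2, with Frobenius functional `Λ` and `Λ`-dual bases
`(e i)`, `(f i)`.  With `F := D/k·1` (which is `3`-dimensional), `π : D → F` the quotient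
map, and `ρ : D → F ⊗ F`, `d ↦ ∑ i, π (d * e i) ⊗ π (f i)`, the image of `ρ` is contained
in the `6`-dimensional space `Sym₂ F` of symmetric tensors, `ρ` is injective, and hence
`dim (Sym₂ F / im ρ) = 2`. -/
theorem rho_injective_symmetric_and_coker_dim_two (h2 : (2 : k) ≠ 0)
    (hdim : Module.finrank k D = 4)
    (Λ : D →ₗ[k] k) (hnd : ∀ x : D, (∀ y : D, Λ (x * y) = 0) → x = 0)
    (e f : Module.Basis (Fin 4) k D)
    (hdual : ∀ i j, Λ (e i * f j) = if i = j then 1 else 0) :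
    LinearMap.range (frobRho k D e f) ≤ symTensors k (FrobQuotF k D) ∧
    Function.Injective (frobRho k D e f) ∧
    Module.finrank k ↥(symTensors k (FrobQuotF k D)) = 6 ∧
    Module.finrank k
      (@HasQuotient.Quotient _ _
        (@Submodule.hasQuotient k ↥(symTensors k (FrobQuotF k D)) _ _ _)
        ((LinearMap.range (frobRho k D e f)).comap
          (symTensors k (FrobQuotF k D)).subtype)) = 2 := by
  haveI : Module.Finite k D := Module.Finite.of_basis e
  have h1ne : (1 : D) ≠ 0 := by
    intro h
    have : Subsingleton D := subsingleton_of_zero_eq_one h.symm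
    rw [Module.finrank_zero_of_subsingleton] at hdim
    exact absurd hdim (by omega)
  -- dimension of F
  have hF3 : Module.finrank k (FrobQuotF k D) = 3 := by
    have hs : Module.finrank k (Submodule.span k {(1 : D)}) = 1 :=
      finrank_span_singleton h1ne
    have hq := Submodule.finrank_quotient_add_finrank (Submodule.span k {(1 : D)})
    rw [hs, hdim] at hq
    exact Nat.add_right_cancel hq
  -- Part 1: range of ρ consists of symmetric tensors
  have hrange : LinearMap.range (frobRho k D e f) ≤ symTensors k (FrobQuotF k D) := by
    rintro _ ⟨d, rfl⟩
    rw [frobRho_apply]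
    have key : ∑ i : Fin 4, frobPi k D (d * e i) ⊗ₜ[k] frobPi k D (f i)
        = (2 : k)⁻¹ • ∑ i : Fin 4,
            (frobPi k D (d * e i) ⊗ₜ[k] frobPi k D (f i)
              + frobPi k D (f i) ⊗ₜ[k] frobPi k D (d * e i)) := by
      rw [Finset.sum_add_distrib, rho_symm Λ e f hdual d,
        ← two_smul k (∑ i : Fin 4, frobPi k D (d * e i) ⊗ₜ[k] frobPi k D (f i)),
        smul_smul, inv_mul_cancel₀ h2, one_smul]
    rw [key]
    exact Submodule.smul_mem _ _ (Submodule.sum_mem _ fun i _ =>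
      Submodule.subset_span ⟨frobPi k D (d * e i), frobPi k D (f i), rfl⟩)
  -- Part 2: injectivity
  have hinj : Function.Injective (frobRho k D e f) := by
    rw [injective_iff_map_eq_zero]
    intro d hd0
    apply rho_inj_aux hdim Λ hnd d
    intro a b ha hb
    have hdual' : ∀ i j, Λ (f i * e j) = if i = j then 1 else 0 := by
      intro i j
      rw [mul_comm, hdual]
      simp [eq_comm]
    have hφ : Submodule.span k {(1 : D)} ≤ LinearMap.ker (Λ ∘ₗ LinearMap.mulLeft k a) := by
      rw [Submodule.span_le, Set.singleton_subset_iff]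
      simp only [SetLike.mem_coe, LinearMap.mem_ker, LinearMap.comp_apply,
        LinearMap.mulLeft_apply, mul_one]
      exact ha
    have hψ : Submodule.span k {(1 : D)} ≤ LinearMap.ker (Λ ∘ₗ LinearMap.mulLeft k b) := by
      rw [Submodule.span_le, Set.singleton_subset_iff]
      simp only [SetLike.mem_coe, LinearMap.mem_ker, LinearMap.comp_apply,
        LinearMap.mulLeft_apply, mul_one]
      exact hb
    set φ := Submodule.liftQ _ _ hφ with hφdef
    set ψ := Submodule.liftQ _ _ hψ with hψdef
    set L := TensorProduct.lift ((LinearMap.mul k k).compl₁₂ φ ψ) with hLdef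
    have hL := congrArg L hd0
    rw [frobRho_apply, map_sum, map_zero] at hL
    have hterm : ∀ i : Fin 4,
        L (frobPi k D (d * e i) ⊗ₜ[k] frobPi k D (f i))
          = Λ (a * (d * e i)) * Λ (b * f i) := fun i => rfl
    rw [Finset.sum_congr rfl fun i _ => hterm i] at hL
    have hexp := dual_expand Λ f e hdual' (a * d)
    have key : Λ (b * (a * d)) = ∑ i : Fin 4, Λ (a * (d * e i)) * Λ (b * f i) := by
      conv_lhs => rw [← hexp]
      rw [Finset.mul_sum, map_sum]
      refine Finset.sum_congr rfl fun i _ => ?_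
      rw [mul_smul_comm, map_smul, smul_eq_mul]
      congr 2
      ring
    rw [key]
    exact hL
  refine ⟨hrange, hinj, finrank_symTensors h2 (FrobQuotF k D) hF3, ?_⟩
  -- Part 4: dimension count
  have h4 : Module.finrank k (LinearMap.range (frobRho k D e f)) = 4 := by
    rw [LinearMap.finrank_range_of_inj hinj, hdim]
  have hc4 : Module.finrank k
      ((LinearMap.range (frobRho k D e f)).comap
        (symTensors k (FrobQuotF k D)).subtype) = 4 := by
    exact (LinearEquiv.finrank_eq (Submodule.comapSubtypeEquivOfLe hrange)).trans h4
  have hq := Submodule.finrank_quotient_add_finrank (R := k)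
    (M := ↥(symTensors k (FrobQuotF k D))) ((LinearMap.range (frobRho k D e f)).comap (symTensors k (FrobQuotF k D)).subtype)
  rw [hc4, finrank_symTensors h2 (FrobQuotF k D) hF3] at hq
  exact Nat.add_right_cancel hq

end
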